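/- Every ≪-approximately cofinal subset of the positive unit ball of a C*-algebra is ≪-approximately directed: if U ⊆ A¹₊ is such that for every b ∈ A¹₊ and ε > 0 there is u ∈ U with ‖b - bu‖ < ε, then for all a, b ∈ U and ε > 0 there is u ∈ U with ‖a - au‖ < ε and ‖b - bu‖ < ε. -/

import Mathlib

section StarModuleProof
variable {A : Type*} [NonUnitalNormedRing A] [StarRing A] [CStarRing A]
    [NormedSpace ℂ A] [IsScalarTower ℂ A A] [SMulCommClass ℂ A A]
    [PartialOrder A] [StarOrderedRing A]

open Complex

/-- A self-adjoint element whose cube is zero, is zero. -/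
private lemma aux_cube_zero {d : A} (hd : star d = d) (h3 : d * d * d = 0) : d = 0 := by
  have h4 : (d * d) * (d * d) = 0 := by
    calc (d * d) * (d * d) = (d * d * d) * d := by rw [mul_assoc, mul_assoc, mul_assoc]
    _ = 0 := by rw [h3, zero_mul]
  have hdd : star (d * d) = d * d := by rw [star_mul, hd]
  have h2 : ‖d * d‖ * ‖d * d‖ = 0 := by
    rw [← CStarRing.norm_star_mul_self (x := d * d), hdd, h4, norm_zero]
  have h2' : d * d = 0 := by
    rwa [mul_self_eq_zero, norm_eq_zero] at h2
  have h1 : ‖d‖ * ‖d‖ = 0 := by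
    rw [← CStarRing.norm_star_mul_self (x := d), hd, h2', norm_zero]
  rwa [mul_self_eq_zero, norm_eq_zero] at h1

/-- star commutes with real scalars (by density of ℚ and continuity). -/
private lemma aux_real_smul (r : ℝ) (x : A) : star (r • x) = r • star x := by
  have hint : ∀ (n : ℤ) (y : A), star ((n : ℝ) • y) = (n : ℝ) • star y := by
    intro n y
    rw [Int.cast_smul_eq_zsmul, Int.cast_smul_eq_zsmul, star_zsmul]
  have hrat : ∀ (q : ℚ) (y : A), star ((q : ℝ) • y) = (q : ℝ) • star y := by
    intro q y
    have hden : ((q.den : ℝ)) ≠ 0 := by exact_mod_cast q.den_nz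
    apply smul_right_injective A hden
    have hqd : ∀ z : A, (q.den : ℝ) • (q : ℝ) • z = ((q.num : ℤ) : ℝ) • z := by
      intro z
      rw [smul_smul]
      congr 1
      push_cast [Rat.cast_def]
      field_simp
    calc (q.den : ℝ) • star ((q : ℝ) • y)
        = star ((q.den : ℝ) • (q : ℝ) • y) := by
          rw [show ((q.den : ℝ)) = ((q.den : ℤ) : ℝ) by push_cast; ring, hint]
      _ = star (((q.num : ℤ) : ℝ) • y) := by rw [hqd]
      _ = ((q.num : ℤ) : ℝ) • star y := hint _ _
      _ = (q.den : ℝ) • (q : ℝ) • star y := (hqd _).symm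
  have h1 : Continuous fun r : ℝ => star (r • x) :=
    continuous_star.comp (continuous_id.smul continuous_const)
  have h2 : Continuous fun r : ℝ => r • star x := continuous_id.smul continuous_const
  have := DenseRange.equalizer Rat.denseRange_cast h1 h2
    (funext fun q => hrat q x)
  exact congrFun this r

/-- `w ↦ I • star (I • w)` preserves nonnegativity. -/
private lemma aux_K_nonneg {w : A} (hw : 0 ≤ w) : 0 ≤ I • star (I • w) := by
  rw [StarOrderedRing.nonneg_iff] at hw
  induction hw using AddSubmonoid.closure_induction with
  | mem z hz =>
    obtain ⟨s, rfl⟩ := hz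
    have h1 : I • (star s * s) = star s * (I • s) := (mul_smul_comm _ _ _).symm
    have : I • star (I • (star s * s)) = star (I • s) * (I • s) := by
      rw [h1, star_mul, star_star]
      exact (mul_smul_comm _ _ _).symm
    rw [this]
    exact star_mul_self_nonneg _
  | zero => simp
  | add x y _ _ hx hy =>
    rw [smul_add, star_add, smul_add]
    exact add_nonneg hx hy

/-- The key involution identity on nonnegative elements. -/
private lemma aux_K_eq {w : A} (hw : 0 ≤ w) : I • star (I • w) = w := by
  set u := I • star (I • w) with hu_def
  have hu : 0 ≤ u := aux_K_nonneg hw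
  have hw' : star w = w := (IsSelfAdjoint.of_nonneg hw).star_eq
  have hu' : star u = u := (IsSelfAdjoint.of_nonneg hu).star_eq
  -- multiplicativity: K w₁ * K w₂ = star w₁ * star w₂
  have hmul : ∀ w₁ w₂ : A,
      (I • star (I • w₁)) * (I • star (I • w₂)) = star w₁ * star w₂ := by
    intro w₁ w₂
    have hpq : (I • w₂) * (I • w₁) = -(w₂ * w₁) := by
      rw [smul_mul_assoc, mul_smul_comm, smul_smul, I_mul_I, neg_one_smul]
    calc (I • star (I • w₁)) * (I • star (I • w₂))
        = (I * I) • (star (I • w₁) * star (I • w₂)) := by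
          rw [smul_mul_assoc, mul_smul_comm, smul_smul]
      _ = -(star ((I • w₂) * (I • w₁))) := by rw [I_mul_I, neg_one_smul, star_mul]
      _ = star w₁ * star w₂ := by rw [hpq, star_neg, neg_neg, star_mul]
  -- K is an involution
  have hKK : I • star (I • u) = w := by
    have h1 : I • u = -star (I • w) := by
      rw [hu_def, smul_smul, I_mul_I, neg_one_smul]
    rw [h1, star_neg, star_star, smul_neg, smul_smul, I_mul_I, neg_one_smul, neg_neg]
  have husq : u * u = w * w := by
    have := hmul w w
    rwa [← hu_def, hw'] at this
  have hcomm : u * w = w * u := by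
    have := hmul w u
    rw [← hu_def, hKK, hw', hu'] at this
    exact this
  set d := u - w with hd_def
  have hd : star d = d := by rw [hd_def, star_sub, hu', hw']
  have h5 : d * (u + w) = 0 := by
    rw [hd_def, sub_mul, mul_add, mul_add, husq, hcomm]
    abel
  have hdu : 0 ≤ d * u * d := by simpa [hd] using star_left_conjugate_nonneg hu d
  have hdw : 0 ≤ d * w * d := by simpa [hd] using star_left_conjugate_nonneg hw d
  have hsum : d * u * d + d * w * d = 0 := by
    have : d * (u + w) * d = 0 := by rw [h5, zero_mul]
    rwa [mul_add, add_mul] at this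
  have hdu0 : d * u * d = 0 := by
    have h := eq_neg_of_add_eq_zero_left hsum
    exact le_antisymm (h ▸ neg_nonpos_of_nonneg hdw) hdu
  have hdw0 : d * w * d = 0 := by
    have h := eq_neg_of_add_eq_zero_right hsum
    exact le_antisymm (h ▸ neg_nonpos_of_nonneg hdu) hdw
  have h3 : d * d * d = 0 := by
    have : d * d = d * u - d * w := by rw [hd_def, mul_sub]
    rw [this, sub_mul, mul_assoc, mul_assoc, ← mul_assoc d u d, ← mul_assoc d w d,
      hdu0, hdw0, sub_zero]
  have := aux_cube_zero hd h3
  rw [hd_def, sub_eq_zero] at this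
  exact this

private lemma aux_star_I_smul_nonneg {b : A} (hb : 0 ≤ b) : star (I • b) = -(I • b) := by
  have h := aux_K_eq hb
  have : I • (I • star (I • b)) = I • b := by rw [h]
  rwa [smul_smul, I_mul_I, neg_one_smul, neg_eq_iff_eq_neg] at this

private lemma aux_star_I_smul (a : A) : star (I • a) = -(I • star a) := by
  have hb : ∀ b : A, 0 ≤ b → ∀ a : A, b * (star (I • a) + I • star a) = 0 := by
    intro b hb a
    have hbsa : star b = b := (IsSelfAdjoint.of_nonneg hb).star_eq
    have h1 : b * star (I • a) = -(I • (b * star a)) := by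
      calc b * star (I • a) = star ((I • a) * star b) := by rw [star_mul, star_star]
        _ = star (a * (I • b)) := by rw [hbsa, smul_mul_assoc, mul_smul_comm]
        _ = star (I • b) * star a := by rw [star_mul]
        _ = -(I • b) * star a := by rw [aux_star_I_smul_nonneg hb]
        _ = -(I • (b * star a)) := by rw [neg_mul, smul_mul_assoc]
    rw [mul_add, h1, mul_smul_comm, neg_add_cancel]
  set x := star (I • a) + I • star a with hx_def
  have hx0 : (x * star x) * x = 0 := hb _ (mul_star_self_nonneg x) a
  have hy : (star x * x) * (star x * x) = 0 := by
    calc (star x * x) * (star x * x) = star x * ((x * star x) * x) := by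
          rw [mul_assoc, ← mul_assoc x]
      _ = 0 := by rw [hx0, mul_zero]
  have hysa : star (star x * x) = star x * x := by rw [star_mul, star_star]
  have hy0 : star x * x = 0 := by
    have := CStarRing.norm_star_mul_self (x := star x * x)
    rw [hysa, hy, norm_zero] at this
    have := (mul_self_eq_zero.mp this.symm)
    rwa [norm_eq_zero] at this
  have hxn : ‖x‖ * ‖x‖ = 0 := by
    rw [← CStarRing.norm_star_mul_self (x := x), hy0, norm_zero]
  have hx : x = 0 := by rwa [mul_self_eq_zero, norm_eq_zero] at hxn
  have h0 : star (I • a) + I • star a = 0 := hx_def ▸ hx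
  exact eq_neg_of_add_eq_zero_left h0

private theorem my_starModule : StarModule ℂ A := by
  constructor
  intro z x
  have hre : ∀ (r : ℝ) (y : A), star ((r : ℂ) • y) = (r : ℂ) • star y := by
    intro r y
    rw [Complex.coe_smul, Complex.coe_smul, aux_real_smul]
  have hz : z • x = (z.re : ℂ) • x + (z.im : ℂ) • (I • x) := by
    rw [smul_smul, ← add_smul, Complex.re_add_im]
  rw [hz, star_add, hre, hre, aux_star_I_smul, smul_neg, smul_smul,
    ← sub_eq_add_neg, ← sub_smul]
  congr 1
  rw [Complex.star_def]
  apply Complex.ext <;> simp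

end StarModuleProof

/-- Every `≪`-approximately cofinal subset of the positive unit ball of a C*-algebra is
`≪`-approximately directed. -/
theorem stmt_2 {A : Type*} [NonUnitalNormedRing A] [StarRing A] [CStarRing A]
    [NormedSpace ℂ A] [IsScalarTower ℂ A A] [SMulCommClass ℂ A A]
    [PartialOrder A] [StarOrderedRing A] [CompleteSpace A]
    (U : Set A) (hU : U ⊆ {x | 0 ≤ x ∧ ‖x‖ ≤ 1})
    (hcof : ∀ b : A, 0 ≤ b → ‖b‖ ≤ 1 → ∀ ε : ℝ, 0 < ε → ∃ u ∈ U, ‖b - b * u‖ < ε) :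
    ∀ a ∈ U, ∀ b ∈ U, ∀ ε : ℝ, 0 < ε → ∃ u ∈ U, ‖a - a * u‖ < ε ∧ ‖b - b * u‖ < ε := by
  letI : StarModule ℂ A := my_starModule
  letI : NonUnitalCStarAlgebra A := { }
  intro a haU b hbU ε hε
  obtain ⟨ha, hna⟩ := hU haU
  obtain ⟨hb, hnb⟩ := hU hbU
  have hasa : star a = a := (IsSelfAdjoint.of_nonneg ha).star_eq
  have hbsa : star b = b := (IsSelfAdjoint.of_nonneg hb).star_eq
  set s : A := a * a + b * b with hs
  have hs0 : (0:A) ≤ s := by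
    rw [hs]
    have h1 : (0:A) ≤ a * a := by simpa [hasa] using star_mul_self_nonneg a
    have h2 : (0:A) ≤ b * b := by simpa [hbsa] using star_mul_self_nonneg b
    exact add_nonneg h1 h2
  have hssa : star s = s := (IsSelfAdjoint.of_nonneg hs0).star_eq
  set c : A := (2⁻¹ : ℝ) • s with hcdef
  have hc0 : (0:A) ≤ c := by
    have hhalf : (0:ℝ) ≤ (2⁻¹:ℝ) := by norm_num
    have key : ∀ x : A, star x = x → (0:A) ≤ (2⁻¹ : ℝ) • (x * x) := by
      intro x hx
      have : (2⁻¹ : ℝ) • (x * x) = star ((Real.sqrt 2⁻¹) • x) * ((Real.sqrt 2⁻¹) • x) := by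
        rw [aux_real_smul, hx, smul_mul_assoc, mul_smul_comm, smul_smul,
          Real.mul_self_sqrt hhalf]
      rw [this]
      exact star_mul_self_nonneg _
    rw [hcdef, hs, smul_add]
    exact add_nonneg (key a hasa) (key b hbsa)
  have hnc : ‖c‖ ≤ 1 := by
    have h1 : ‖c‖ = 2⁻¹ * ‖s‖ := by
      rw [hcdef, norm_smul]
      norm_num
    have h2 : ‖s‖ ≤ 2 := by
      calc ‖s‖ ≤ ‖a * a‖ + ‖b * b‖ := norm_add_le _ _
        _ ≤ ‖a‖ * ‖a‖ + ‖b‖ * ‖b‖ := add_le_add (norm_mul_le a a) (norm_mul_le b b)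
        _ ≤ 1 * 1 + 1 * 1 := by gcongr <;> first | exact hna | exact hnb | exact norm_nonneg _
        _ = 2 := by norm_num
    rw [h1]; linarith
  obtain ⟨u, huU, hu⟩ := hcof c hc0 hnc (ε ^ 2 / 2) (by positivity)
  obtain ⟨hu0, hun⟩ := hU huU
  have hsu : ‖s - s * u‖ < ε ^ 2 := by
    have heq : s - s * u = (2:ℝ) • (c - c * u) := by
      rw [hcdef, smul_sub, smul_mul_assoc, smul_smul, smul_smul]
      norm_num
    rw [heq, norm_smul]
    simp only [Real.norm_ofNat]
    linarith
  -- now the key estimate, working in the unitization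
  have key : ∀ x : A, 0 ≤ x → x * x ≤ s → ‖x - x * u‖ < ε := by
    intro x hx hxs
    have hxsa : star x = x := (IsSelfAdjoint.of_nonneg hx).star_eq
    set B := Unitization ℂ A
    set x' : B := (x : B) with hx'
    set u' : B := (u : B) with hu'
    set s' : B := (s : B) with hs'
    have hu0' : (0:B) ≤ u' := Unitization.inr_nonneg_iff.mpr hu0
    have hs0' : (0:B) ≤ s' := Unitization.inr_nonneg_iff.mpr hs0
    have hx0' : (0:B) ≤ x' := Unitization.inr_nonneg_iff.mpr hx
    have hu1' : u' ≤ 1 := by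
      rw [← CStarAlgebra.norm_le_one_iff_of_nonneg u' hu0']
      rw [hu', Unitization.norm_inr]
      exact hun
    set e : B := 1 - u' with he
    have he0 : (0:B) ≤ e := sub_nonneg.mpr hu1'
    have he1 : e ≤ 1 := by
      rw [he]
      simpa using hu0'
    have hesa : star e = e := (IsSelfAdjoint.of_nonneg he0).star_eq
    have hne : ‖e‖ ≤ 1 := (CStarAlgebra.norm_le_one_iff_of_nonneg e he0).mpr he1
    have hxsa' : star x' = x' := (IsSelfAdjoint.of_nonneg hx0').star_eq
    have hssa' : star s' = s' := (IsSelfAdjoint.of_nonneg hs0').star_eq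
    have hxxsa : IsSelfAdjoint (x * x) := by
      rw [IsSelfAdjoint, star_mul, hxsa]
    have hxs' : x' * x' ≤ s' := by
      rw [hx', hs', ← Unitization.inr_mul ℂ x x]
      exact (Unitization.inr_le_iff _ _ hxxsa hssa).mpr hxs
    have hxe : ((x - x * u : A) : B) = x' * e := by
      rw [Unitization.inr_sub ℂ, Unitization.inr_mul ℂ, he, mul_sub, mul_one]
    have hnorm : ‖x - x * u‖ = ‖x' * e‖ := by
      rw [← Unitization.norm_inr (𝕜 := ℂ) (x - x * u), hxe]
    have hsq : ‖x' * e‖ * ‖x' * e‖ = ‖e * (x' * x') * e‖ := by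
      rw [← CStarRing.norm_star_mul_self (x := x' * e), star_mul, hesa, hxsa']
      congr 1
      noncomm_ring
    have hxx0' : (0:B) ≤ x' * x' := by
      simpa [hxsa'] using star_mul_self_nonneg x'
    have hconj : e * (x' * x') * e ≤ e * s' * e := by
      have := star_left_conjugate_le_conjugate hxs' e
      rwa [hesa] at this
    have hconj0 : (0:B) ≤ e * (x' * x') * e := by
      have := star_left_conjugate_nonneg hxx0' e
      rwa [hesa] at this
    have h1 : ‖e * (x' * x') * e‖ ≤ ‖e * s' * e‖ :=
      CStarAlgebra.norm_le_norm_of_nonneg_of_le hconj0 hconj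
    have h2 : ‖e * s' * e‖ ≤ ‖s - s * u‖ := by
      calc ‖e * s' * e‖ ≤ ‖e * s'‖ * ‖e‖ := norm_mul_le _ _
        _ ≤ ‖e * s'‖ * 1 := mul_le_mul_of_nonneg_left hne (norm_nonneg _)
        _ = ‖star (s' * e)‖ := by rw [mul_one, star_mul, hssa', hesa]
        _ = ‖s' * e‖ := norm_star _
        _ = ‖s - s * u‖ := by
            rw [he, mul_sub, mul_one, hs', hu', ← Unitization.inr_mul ℂ,
              ← Unitization.inr_sub ℂ, Unitization.norm_inr]
    have hfin : ‖x - x * u‖ ^ 2 < ε ^ 2 := by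
      rw [hnorm, sq]
      calc ‖x' * e‖ * ‖x' * e‖ = ‖e * (x' * x') * e‖ := hsq
        _ ≤ ‖s - s * u‖ := le_trans h1 h2
        _ < ε ^ 2 := hsu
    exact lt_of_pow_lt_pow_left₀ 2 hε.le hfin
  exact ⟨u, huU, key a ha (le_add_of_nonneg_right (by simpa [hbsa] using star_mul_self_nonneg b)),
    key b hb (le_add_of_nonneg_left (by simpa [hasa] using star_mul_self_nonneg a))⟩
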